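/- Let G be a graph containing a 4-cycle v1v2v3v4 with two adjacent 4-vertices, deg_G(v1) = deg_G(v2) = 4. Then the subgraph induced by {v1,v2,v3,v4} is ({house},5)-boundary-reducible with boundary {v3,v4}. -/

import Mathlib

open Finset

/-- A proper coloring of `G` from the lists `L`. -/
def IsProperListColoring {V : Type} (G : SimpleGraph V) (L : V → Finset ℕ) (φ : V → ℕ) : Prop :=
  (∀ v, φ v ∈ L v) ∧ ∀ ⦃u v : V⦄, G.Adj u v → φ u ≠ φ v

/-- `G` is weighted `ε`-flexible for lists of size `k`. -/
def WeightedFlexible {V : Type} [Fintype V] (G : SimpleGraph V) (k : ℕ) (ε : ℝ) : Prop :=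
  ∀ L : V → Finset ℕ, (∀ v, k ≤ (L v).card) →
    ∀ w : V → ℕ → ℝ, (∀ v c, 0 ≤ w v c) → (∀ v c, c ∉ L v → w v c = 0) →
      ∃ φ : V → ℕ, IsProperListColoring G L φ ∧
        ε * (∑ v, ∑ c ∈ L v, w v c) ≤ ∑ v, w v (φ v)

/-- `G` is weakly `ε`-flexible for lists of size `k`. -/
def WeaklyFlexible {V : Type} [Fintype V] (G : SimpleGraph V) (k : ℕ) (ε : ℝ) : Prop :=
  ∀ L : V → Finset ℕ, (∀ v, k ≤ (L v).card) →
    ∀ r : V → ℕ, (∀ v, r v ∈ L v) →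
      ∃ φ : V → ℕ, IsProperListColoring G L φ ∧
        ε * (Fintype.card V : ℝ) ≤ ((Finset.univ.filter fun v => φ v = r v).card : ℝ)

/-- `G` has a drawing in the plane: vertices go to distinct points, edges to simple
continuous arcs joining their endpoints, arcs internally avoid vertices and each other. -/
def HasPlanarEmbedding {V : Type} (G : SimpleGraph V) : Prop :=
  ∃ (pos : V → ℝ × ℝ) (γ : Sym2 V → ℝ → ℝ × ℝ),
    Function.Injective pos ∧
    (∀ e ∈ G.edgeSet, ContinuousOn (γ e) (Set.Icc 0 1)) ∧
    (∀ e ∈ G.edgeSet, Set.InjOn (γ e) (Set.Icc 0 1)) ∧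
    (∀ u v : V, G.Adj u v → ({γ s(u, v) 0, γ s(u, v) 1} : Set (ℝ × ℝ)) = {pos u, pos v}) ∧
    (∀ e ∈ G.edgeSet, ∀ t ∈ Set.Ioo (0 : ℝ) 1, γ e t ∉ Set.range pos) ∧
    (∀ e ∈ G.edgeSet, ∀ f ∈ G.edgeSet, e ≠ f →
      ∀ s ∈ Set.Ioo (0 : ℝ) 1, ∀ t ∈ Set.Ioo (0 : ℝ) 1, γ e s ≠ γ f t)

/-- `G` contains a copy of the graph `p.2` as a (not necessarily induced) subgraph. -/
def ContainsCopy {V : Type} (G : SimpleGraph V) (p : (W : Type) × SimpleGraph W) : Prop :=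
  ∃ f : p.2 →g G, Function.Injective f

/-- `K₄` minus an edge (the diamond). -/
def diamondGraph : SimpleGraph (Fin 4) :=
  SimpleGraph.fromEdgeSet {s(0, 1), s(0, 2), s(0, 3), s(1, 2), s(1, 3)}

/-- The house: a `3`-cycle `0 1 4` and a `4`-cycle `0 1 2 3` sharing the edge `01`. -/
def houseGraph : SimpleGraph (Fin 5) :=
  SimpleGraph.fromEdgeSet {s(0, 1), s(1, 2), s(2, 3), s(3, 0), s(0, 4), s(1, 4)}

/-- Two triangles sharing exactly one vertex. -/
def bowtieGraph : SimpleGraph (Fin 5) :=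
  SimpleGraph.fromEdgeSet {s(0, 1), s(1, 2), s(0, 2), s(0, 3), s(3, 4), s(0, 4)}

/-- Two disjoint triangles joined by an edge. -/
def twoTrianglesEdgeGraph : SimpleGraph (Fin 6) :=
  SimpleGraph.fromEdgeSet {s(0, 1), s(1, 2), s(0, 2), s(3, 4), s(4, 5), s(3, 5), s(0, 3)}

def IsTriangle {V : Type} (G : SimpleGraph V) (a b c : V) : Prop :=
  G.Adj a b ∧ G.Adj b c ∧ G.Adj a c

/-- Any two distinct `3`-cycles of `G` are at distance at least `2`. -/
def TrianglesFarApart {V : Type} (G : SimpleGraph V) : Prop :=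
  ∀ a b c a' b' c' : V, IsTriangle G a b c → IsTriangle G a' b' c' →
    ({a, b, c} : Set V) ≠ ({a', b', c'} : Set V) →
    ∀ x ∈ ({a, b, c} : Set V), ∀ y ∈ ({a', b', c'} : Set V), x ≠ y ∧ ¬ G.Adj x y

/-- Every nonempty (induced) subgraph of `G` has a vertex of degree at most `d`. -/
def Degenerate {V : Type} (G : SimpleGraph V) [DecidableRel G.Adj] (d : ℕ) : Prop :=
  ∀ S : Finset V, S.Nonempty → ∃ v ∈ S, (S.filter fun w => G.Adj v w).card ≤ d

/-- The degree of `v` into the set `A`. -/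
def degIn {V : Type} (G : SimpleGraph V) [DecidableRel G.Adj] (A : Finset V) (v : V) : ℕ :=
  (A.filter fun w => G.Adj v w).card

/-- The graph induced by `G` on `T` is colorable from every list assignment
with list sizes at least `f`. -/
def ColorableOn {V : Type} (G : SimpleGraph V) (T : Finset V) (f : V → ℤ) : Prop :=
  ∀ L : V → Finset ℕ, (∀ v ∈ T, f v ≤ ((L v).card : ℤ)) →
    ∃ φ : V → ℕ, (∀ v ∈ T, φ v ∈ L v) ∧ ∀ u ∈ T, ∀ v ∈ T, G.Adj u v → φ u ≠ φ v

/-- The subgraph of `G` induced on `S`, together with one additional vertex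
adjacent exactly to the vertices of `I`. -/
def apexGraph {V : Type} (G : SimpleGraph V) (S I : Finset V) :
    SimpleGraph ({x // x ∈ S} ⊕ Unit) where
  Adj x y :=
    match x, y with
    | Sum.inl a, Sum.inl b => G.Adj a.1 b.1
    | Sum.inl a, Sum.inr _ => a.1 ∈ I
    | Sum.inr _, Sum.inl b => b.1 ∈ I
    | Sum.inr _, Sum.inr _ => False
  symm := by
    constructor
    rintro (a | a) (b | b) h
    · exact G.adj_symm h
    · exact h
    · exact h
    · exact h
  loopless := by
    constructor
    rintro (a | a) h
    · exact G.irrefl h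
    · exact h

/-- `I ⊆ S` is `F`-forbidding (for the subgraph of `G` induced on `S`):
the induced subgraph plus an apex over `I` contains no member of `F` as a subgraph. -/
def Forbidding {V : Type} (F : Set ((W : Type) × SimpleGraph W)) (G : SimpleGraph V)
    (S I : Finset V) : Prop :=
  ∀ p ∈ F, ¬ ContainsCopy (apexGraph G S I) p

/-- The subgraph of `G` induced on `S` is `(F,k)`-boundary-reducible with boundary `B`,
inside the ambient induced subgraph of `G` on `A` (degrees `deg_G` are measured in `A`). -/
def BoundaryReducibleIn {V : Type} [DecidableEq V] (F : Set ((W : Type) × SimpleGraph W))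
    (k : ℕ) (G : SimpleGraph V) [DecidableRel G.Adj] (A S B : Finset V) : Prop :=
  S ⊆ A ∧ B ⊂ S ∧
  (∀ v ∈ S \ B, ColorableOn G (S \ B)
      (Function.update (fun w => (k : ℤ) - degIn G A w + degIn G (S \ B) w) v 1)) ∧
  (∀ I : Finset V, I ⊆ S \ B → (I.card : ℤ) ≤ (k : ℤ) - 2 → Forbidding F G S I →
    ColorableOn G (S \ B)
      (fun w => (k : ℤ) - degIn G A w + degIn G (S \ B) w - if w ∈ I then 1 else 0))

/-- Weak `(F,k)`-boundary-reducibility, witnessed by the set `Fx = Fix(H)`. -/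
def WeakBoundaryReducibleInWith {V : Type} [DecidableEq V]
    (F : Set ((W : Type) × SimpleGraph W)) (k : ℕ) (G : SimpleGraph V) [DecidableRel G.Adj]
    (A S B Fx : Finset V) : Prop :=
  S ⊆ A ∧ B ⊂ S ∧ Fx.Nonempty ∧ Fx ⊆ S \ B ∧
  (∀ v ∈ Fx, ColorableOn G (S \ B)
      (Function.update (fun w => (k : ℤ) - degIn G A w + degIn G (S \ B) w) v 1)) ∧
  (∀ I : Finset V, I ⊆ S \ B → (I.card : ℤ) ≤ (k : ℤ) - 2 → Forbidding F G S I →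
    ColorableOn G (S \ B)
      (fun w => (k : ℤ) - degIn G A w + degIn G (S \ B) w - if w ∈ I then 1 else 0))

/-- An `(F,k,b)`-resolution of `G`: nested induced subgraphs `G_i` of `G` on the vertex
sets `A i`, where `G_i` is obtained from `G_{i-1}` by deleting `H_i - B_i` for an induced
`(F,k)`-boundary-reducible subgraph `H_i` (on vertex set `S i`) of `G_{i-1}`,
and the last graph `G_M` is itself reducible with empty boundary and has at most `b` vertices. -/
structure Resolution {V : Type} [Fintype V] [DecidableEq V]
    (F : Set ((W : Type) × SimpleGraph W)) (k b : ℕ)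
    (G : SimpleGraph V) [DecidableRel G.Adj] where
  M : ℕ
  S : ℕ → Finset V
  B : ℕ → Finset V
  A : ℕ → Finset V
  hA0 : A 0 = Finset.univ
  hAstep : ∀ i, 1 ≤ i → i ≤ M → A i = A (i - 1) \ (S i \ B i)
  avoid : ∀ p ∈ F, ¬ ContainsCopy G p
  red : ∀ i, 1 ≤ i → i ≤ M → BoundaryReducibleIn F k G (A (i - 1)) (S i) (B i)
  size : ∀ i, 1 ≤ i → i ≤ M → (S i \ B i).card ≤ b
  last : BoundaryReducibleIn F k G (A M) (A M) ∅
  lastsize : (A M).card ≤ b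

/-- A weak `(F,k,b)`-resolution of `G`; `Fx i` is the set `Fix(H_i)` for the `i`-th
reducible subgraph (`1 ≤ i ≤ M`), and `Fx 0` is the `Fix` set of the last graph `G_M`. -/
structure WeakResolution {V : Type} [Fintype V] [DecidableEq V]
    (F : Set ((W : Type) × SimpleGraph W)) (k b : ℕ)
    (G : SimpleGraph V) [DecidableRel G.Adj] where
  M : ℕ
  S : ℕ → Finset V
  B : ℕ → Finset V
  A : ℕ → Finset V
  Fx : ℕ → Finset V
  hA0 : A 0 = Finset.univ
  hAstep : ∀ i, 1 ≤ i → i ≤ M → A i = A (i - 1) \ (S i \ B i)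
  avoid : ∀ p ∈ F, ¬ ContainsCopy G p
  red : ∀ i, 1 ≤ i → i ≤ M → WeakBoundaryReducibleInWith F k G (A (i - 1)) (S i) (B i) (Fx i)
  size : ∀ i, 1 ≤ i → i ≤ M → (S i \ B i).card ≤ b
  last : WeakBoundaryReducibleInWith F k G (A M) (A M) ∅ (Fx 0)
  lastsize : (A M).card ≤ b

/-- `Fix(G)`: the union of the `Fix` sets of the reducible subgraphs of the resolution. -/
def WeakResolution.FixG {V : Type} [Fintype V] [DecidableEq V]
    {F : Set ((W : Type) × SimpleGraph W)} {k b : ℕ}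
    {G : SimpleGraph V} [DecidableRel G.Adj] (R : WeakResolution F k b G) : Finset V :=
  (Finset.range (R.M + 1)).biUnion R.Fx


private lemma pair_color {V : Type} [DecidableEq V] (u v : V) (hne : u ≠ v)
    (L : V → Finset ℕ) (h1 : 1 ≤ (L u).card) (h2 : 2 ≤ (L v).card) :
    ∃ φ : V → ℕ, φ u ∈ L u ∧ φ v ∈ L v ∧ φ u ≠ φ v := by
  obtain ⟨c1, hc1⟩ := Finset.card_pos.mp (show 0 < (L u).card by omega)
  obtain ⟨c2, hc2, hcc⟩ := Finset.exists_mem_ne (show 1 < (L v).card by omega) c1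
  refine ⟨fun w => if w = v then c2 else c1, ?_, ?_, ?_⟩
  · simp [hne, hc1]
  · simp [hc2]
  · simp [hne, hcc.symm]

private lemma colorableOn_pair {V : Type} [DecidableEq V] (G : SimpleGraph V) (u v : V)
    (hne : u ≠ v) (f : V → ℤ) (hu : 1 ≤ f u) (hv : 2 ≤ f v) :
    ColorableOn G {u, v} f := by
  intro L hL
  have h1 : 1 ≤ (L u).card := by
    have := hL u (by simp); exact_mod_cast le_trans hu this
  have h2 : 2 ≤ (L v).card := by
    have := hL v (by simp); exact_mod_cast le_trans hv this
  obtain ⟨φ, hφu, hφv, hφne⟩ := pair_color u v hne L h1 h2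
  refine ⟨φ, ?_, ?_⟩
  · intro w hw
    simp only [Finset.mem_insert, Finset.mem_singleton] at hw
    rcases hw with rfl | rfl
    · exact hφu
    · exact hφv
  · intro a ha b hb hab
    simp only [Finset.mem_insert, Finset.mem_singleton] at ha hb
    rcases ha with rfl | rfl <;> rcases hb with rfl | rfl
    · exact absurd hab (G.irrefl)
    · exact hφne
    · exact hφne.symm
    · exact absurd hab (G.irrefl)

theorem fourCycle_twoAdjacentFour_reducible {V : Type} [Fintype V] [DecidableEq V]
    (G : SimpleGraph V) [DecidableRel G.Adj]
    (v1 v2 v3 v4 : V)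
    (h12 : G.Adj v1 v2) (h23 : G.Adj v2 v3) (h34 : G.Adj v3 v4) (h41 : G.Adj v4 v1)
    (h13 : v1 ≠ v3) (h24 : v2 ≠ v4)
    (hd1 : G.degree v1 = 4) (hd2 : G.degree v2 = 4) :
    BoundaryReducibleIn ({⟨Fin 5, houseGraph⟩} : Set ((W : Type) × SimpleGraph W)) 5 G
      Finset.univ {v1, v2, v3, v4} {v3, v4} := by
  have n12 : v1 ≠ v2 := h12.ne
  have n14 : v1 ≠ v4 := h41.ne'
  have n23 : v2 ≠ v3 := h23.ne
  have n34 : v3 ≠ v4 := h34.ne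
  have hD : ({v1, v2, v3, v4} : Finset V) \ {v3, v4} = {v1, v2} := by
    ext x
    simp only [Finset.mem_sdiff, Finset.mem_insert, Finset.mem_singleton]
    constructor
    · rintro ⟨(rfl | rfl | rfl | rfl), hn⟩ <;> tauto
    · rintro (rfl | rfl)
      · exact ⟨Or.inl rfl, by push_neg; exact ⟨h13, n14⟩⟩
      · exact ⟨Or.inr (Or.inl rfl), by push_neg; exact ⟨n23, h24⟩⟩
  have hdegU : ∀ w : V, degIn G Finset.univ w = G.degree w := by
    intro w
    rw [degIn, ← SimpleGraph.neighborFinset_eq_filter, SimpleGraph.degree]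
  have hf1 : ({v1, v2} : Finset V).filter (fun w => G.Adj v1 w) = {v2} := by
    ext x
    simp only [Finset.mem_filter, Finset.mem_insert, Finset.mem_singleton]
    constructor
    · rintro ⟨(rfl | rfl), h⟩
      · exact absurd h (G.irrefl)
      · rfl
    · rintro rfl; exact ⟨Or.inr rfl, h12⟩
  have hf2 : ({v1, v2} : Finset V).filter (fun w => G.Adj v2 w) = {v1} := by
    ext x
    simp only [Finset.mem_filter, Finset.mem_insert, Finset.mem_singleton]
    constructor
    · rintro ⟨(rfl | rfl), h⟩
      · rfl
      · exact absurd h (G.irrefl)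
    · rintro rfl; exact ⟨Or.inl rfl, h12.symm⟩
  have hd1' : degIn G ({v1, v2} : Finset V) v1 = 1 := by rw [degIn, hf1]; simp
  have hd2' : degIn G ({v1, v2} : Finset V) v2 = 1 := by rw [degIn, hf2]; simp
  have hd1'' : degIn G ({v2, v1} : Finset V) v1 = 1 := by
    rw [Finset.pair_comm v2 v1]; exact hd1'
  have hd2'' : degIn G ({v2, v1} : Finset V) v2 = 1 := by
    rw [Finset.pair_comm v2 v1]; exact hd2'
  refine ⟨Finset.subset_univ _, ?_, ?_, ?_⟩
  · constructor
    · intro x hx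
      simp only [Finset.mem_insert, Finset.mem_singleton] at hx
      rcases hx with rfl | rfl <;> simp
    · intro hsub
      have := hsub (Finset.mem_insert_self v1 _)
      simp only [Finset.mem_insert, Finset.mem_singleton] at this
      rcases this with h | h
      · exact h13 h
      · exact n14 h
  · intro v hv
    rw [hD] at hv ⊢
    simp only [Finset.mem_insert, Finset.mem_singleton] at hv
    rcases hv with hv | hv <;> rw [hv]
    · apply colorableOn_pair G v1 v2 n12
      · simp
      · rw [Function.update_of_ne n12.symm, hdegU, hd2, hd2']; norm_num
    · rw [Finset.pair_comm v1 v2]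
      apply colorableOn_pair G v2 v1 n12.symm
      · simp
      · rw [Function.update_of_ne n12, hdegU, hd1, hd1'']; norm_num
  · intro I hI _hIcard hForb
    rw [hD] at hI ⊢
    by_cases hm1 : v1 ∈ I <;> by_cases hm2 : v2 ∈ I
    · exfalso
      apply hForb ⟨Fin 5, houseGraph⟩ rfl
      have m1 : v1 ∈ ({v1, v2, v3, v4} : Finset V) := by simp
      have m2 : v2 ∈ ({v1, v2, v3, v4} : Finset V) := by simp
      have m3 : v3 ∈ ({v1, v2, v3, v4} : Finset V) := by simp
      have m4 : v4 ∈ ({v1, v2, v3, v4} : Finset V) := by simp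
      have hinj : Function.Injective
          (![Sum.inl ⟨v1, m1⟩, Sum.inl ⟨v2, m2⟩, Sum.inl ⟨v3, m3⟩, Sum.inl ⟨v4, m4⟩,
            Sum.inr ()] :
            Fin 5 → ({x // x ∈ ({v1, v2, v3, v4} : Finset V)} ⊕ Unit)) := by
        intro a b hab
        fin_cases a <;> fin_cases b <;> simp at hab ⊢ <;>
          first
            | exact absurd hab n12 | exact absurd hab.symm n12
            | exact absurd hab h13 | exact absurd hab.symm h13
            | exact absurd hab n14 | exact absurd hab.symm n14
            | exact absurd hab n23 | exact absurd hab.symm n23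
            | exact absurd hab h24 | exact absurd hab.symm h24
            | exact absurd hab n34 | exact absurd hab.symm n34
      refine ⟨⟨![Sum.inl ⟨v1, m1⟩, Sum.inl ⟨v2, m2⟩, Sum.inl ⟨v3, m3⟩, Sum.inl ⟨v4, m4⟩,
          Sum.inr ()], ?_⟩, ?_⟩
      · intro a b hab
        rw [houseGraph, SimpleGraph.fromEdgeSet_adj] at hab
        fin_cases a <;> fin_cases b <;>
          simp only [Set.mem_insert_iff, Set.mem_singleton_iff, Sym2.eq_iff] at hab <;>
          first
            | (exfalso; revert hab; decide)
            | exact h12 | exact h12.symm | exact h23 | exact h23.symm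
            | exact h34 | exact h34.symm | exact h41 | exact h41.symm
            | exact hm1 | exact hm2
      · exact fun a b hab => hinj hab
    · apply colorableOn_pair G v1 v2 n12
      · rw [hdegU, hd1, hd1']; simp [hm1]
      · rw [hdegU, hd2, hd2']; simp [hm2]
    · rw [Finset.pair_comm v1 v2]
      apply colorableOn_pair G v2 v1 n12.symm
      · rw [hdegU, hd2, hd2'']; simp [hm2]
      · rw [hdegU, hd1, hd1'']; simp [hm1]
    · apply colorableOn_pair G v1 v2 n12
      · rw [hdegU, hd1, hd1']; simp [hm1]
      · rw [hdegU, hd2, hd2']; simp [hm2]
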